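/- Let Γ ⊂ ℂ be a compact T_n-regular set. If Γ ⊆ ρ(T + A), then Γ is an S_n-regular set, i.e. there exist δ > 0 and N ∈ ℕ such that ‖(S_n − z)φ‖ ≥ δ‖φ‖ for all z ∈ Γ, all φ ∈ L_n and all n ≥ N. -/

import Mathlib

open scoped ComplexInnerProductSpace
open Filter

noncomputable section

lemma cs_aux (a c : ℝ) (b : ℂ) (ha : 0 ≤ a) (hc : 0 ≤ c)
    (hquad : ∀ r : ℝ, 0 ≤ a * r ^ 2 + 2 * ‖b‖ * r + c) : ‖b‖ ^ 2 ≤ a * c := by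
  rcases eq_or_lt_of_le ha with ha0 | hapos
  · have hb : ‖b‖ = 0 := by
      by_contra hb
      have hbpos : 0 < ‖b‖ := lt_of_le_of_ne (norm_nonneg b) (Ne.symm hb)
      have h2 := hquad (-(c + 1) / (2 * ‖b‖))
      have e1 : 2 * ‖b‖ * (-(c + 1) / (2 * ‖b‖)) = -(c + 1) := by
        rw [mul_comm, div_mul_cancel₀]
        positivity
      rw [← ha0, e1] at h2
      nlinarith
    rw [hb, ← ha0]
    nlinarith
  · have h2 := hquad (-(‖b‖ / a))
    have e1 : a * (-(‖b‖ / a)) ^ 2 + 2 * ‖b‖ * (-(‖b‖ / a)) + c = c - ‖b‖ ^ 2 / a := by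
      field_simp
      ring
    rw [e1] at h2
    have h3 : ‖b‖ ^ 2 / a ≤ c := by linarith
    calc ‖b‖ ^ 2 = (‖b‖ ^ 2 / a) * a := by field_simp
    _ ≤ c * a := mul_le_mul_of_nonneg_right h3 (le_of_lt hapos)
    _ = a * c := mul_comm _ _

variable {H : Type*} [NormedAddCommGroup H] [InnerProductSpace ℂ H] [CompleteSpace H]

lemma form_cs (dt : Submodule ℂ H) (t : H →ₗ[ℂ] H →ₗ⋆[ℂ] ℂ) (m : ℝ)
    (therm : ∀ φ ∈ dt, ∀ ψ ∈ dt, t ψ φ = starRingEnd ℂ (t φ ψ))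
    (hlb : ∀ φ ∈ dt, m * ‖φ‖ ^ 2 ≤ (t φ φ).re)
    {u w : H} (hu : u ∈ dt) (hw : w ∈ dt) :
    ‖t u w + ((1 : ℂ) - (m : ℂ)) * ⟪w, u⟫‖ ^ 2 ≤
      ((t u u).re + (1 - m) * ‖u‖ ^ 2) * ((t w w).re + (1 - m) * ‖w‖ ^ 2) := by
  set b : ℂ := t u w + ((1 : ℂ) - (m : ℂ)) * ⟪w, u⟫ with hb
  set a : ℝ := (t u u).re + (1 - m) * ‖u‖ ^ 2 with hadef
  set c : ℝ := (t w w).re + (1 - m) * ‖w‖ ^ 2 with hcdef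
  have hpos : ∀ y ∈ dt, 0 ≤ ((t y y).re + (1 - m) * ‖y‖ ^ 2) := by
    intro y hy
    have := hlb y hy
    nlinarith [sq_nonneg ‖y‖]
  have ha : 0 ≤ a := hpos u hu
  have hc : 0 ≤ c := hpos w hw
  refine cs_aux a c b ha hc ?_
  intro r
  by_cases hbz : b = 0
  · rw [hbz]; simp; nlinarith
  · have hbn : (0:ℝ) < ‖b‖ := norm_pos_iff.mpr hbz
    set s : ℂ := (r : ℂ) * (starRingEnd ℂ b / (‖b‖ : ℂ)) with hs
    set y : H := s • u + w with hy
    have hydt : y ∈ dt := dt.add_mem (dt.smul_mem s hu) hw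
    have hermq : t w u + ((1:ℂ) - (m:ℂ)) * ⟪u, w⟫ = starRingEnd ℂ b := by
      rw [hb, map_add, ← therm u hu w hw, map_mul, ← inner_conj_symm u w]
      simp
    have hexp : t y y + ((1:ℂ) - (m:ℂ)) * ⟪y, y⟫
        = (s * starRingEnd ℂ s) * (t u u + ((1:ℂ) - (m:ℂ)) * ⟪u, u⟫)
          + s * b + starRingEnd ℂ s * starRingEnd ℂ b
          + (t w w + ((1:ℂ) - (m:ℂ)) * ⟪w, w⟫) := by
      rw [← hermq, hb, hy]
      simp only [map_add, map_smul, LinearMap.add_apply, LinearMap.smul_apply,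
        map_smulₛₗ, inner_add_add_self, inner_smul_left, inner_smul_right, smul_eq_mul]
      ring
    have hbb : starRingEnd ℂ b * b = ((‖b‖ : ℂ)) ^ 2 := RCLike.conj_mul b
    have hbne : (‖b‖ : ℂ) ≠ 0 := by exact_mod_cast ne_of_gt hbn
    have hsb : s * b = (r : ℂ) * (‖b‖ : ℂ) := by
      rw [hs, mul_assoc, div_mul_eq_mul_div, hbb, sq, mul_div_assoc, div_self hbne, mul_one]
    have hns : ‖s‖ = |r| := by
      rw [hs]
      simp only [norm_mul, norm_div, RCLike.norm_conj, Complex.norm_real, Real.norm_eq_abs,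
        abs_norm]
      rw [div_self (ne_of_gt hbn), mul_one]
    have hss : s * starRingEnd ℂ s = ((r : ℂ)) ^ 2 := by
      rw [RCLike.mul_conj, hns]
      norm_cast
      rw [sq_abs]
      norm_cast
    have hsbc : starRingEnd ℂ s * starRingEnd ℂ b = (r : ℂ) * (‖b‖ : ℂ) := by
      rw [← map_mul, hsb]
      simp [Complex.conj_ofReal]
    rw [hsb, hss, hsbc] at hexp
    have h1m : ((1:ℂ) - (m:ℂ)) = ((1 - m : ℝ) : ℂ) := by push_cast; ring
    have hyy : (⟪y, y⟫ : ℂ) = (((‖y‖^2 : ℝ)) : ℂ) := by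
      exact_mod_cast inner_self_eq_norm_sq_to_K y
    have huu : (⟪u, u⟫ : ℂ) = (((‖u‖^2 : ℝ)) : ℂ) := by
      exact_mod_cast inner_self_eq_norm_sq_to_K u
    have hww : (⟪w, w⟫ : ℂ) = (((‖w‖^2 : ℝ)) : ℂ) := by
      exact_mod_cast inner_self_eq_norm_sq_to_K w
    rw [hyy, huu, hww, h1m] at hexp
    have hre := congrArg Complex.re hexp
    simp only [← Complex.ofReal_pow, ← Complex.ofReal_mul, Complex.add_re,
      Complex.re_ofReal_mul, Complex.ofReal_re] at hre
    have hq := hpos y hydt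
    nlinarith [hre, hq]

/-- The resolvent set of a (possibly unbounded) operator given as a `LinearPMap`. -/
def pmResolventSet (T : H →ₗ.[ℂ] H) : Set ℂ :=
  {z | ∃ R : H →L[ℂ] H, (∀ y : H, ∃ hy : R y ∈ T.domain, T ⟨R y, hy⟩ - z • R y = y) ∧
        ∀ x : T.domain, R (T x - z • (x : H)) = x}

/-- The spectrum of a (possibly unbounded) operator given as a `LinearPMap`. -/
def pmSpectrum (T : H →ₗ.[ℂ] H) : Set ℂ := (pmResolventSet T)ᶜ

set_option maxHeartbeats 2000000 in
/-- **Theorem (resolvent bound).** If a compact set `Γ` is `T_n`-regular and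
`Γ ⊆ ρ(T+A)`, then `Γ` is `S_n`-regular. -/
theorem stmt_2
    -- `T` is a semi-bounded self-adjoint operator with `m = min σ(T)`
    (T : H →ₗ.[ℂ] H) (hsa : IsSelfAdjoint T)
    (m : ℝ) (hm : IsLeast {x : ℝ | (x : ℂ) ∈ pmSpectrum T} m)
    -- `t` is the closed sesquilinear form associated to `T`
    (dt : Submodule ℂ H) (t : H →ₗ[ℂ] H →ₗ⋆[ℂ] ℂ)
    (hdomt : T.domain ≤ dt)
    (therm : ∀ φ ∈ dt, ∀ ψ ∈ dt, t ψ φ = starRingEnd ℂ (t φ ψ))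
    (hcomp : ∀ φ : T.domain, ∀ ψ ∈ dt, t φ ψ = ⟪ψ, T φ⟫)
    (hlb : ∀ φ ∈ dt, m * ‖φ‖ ^ 2 ≤ (t φ φ).re)
    (tnormSq : H → ℝ)
    (htn : ∀ φ, tnormSq φ = (t φ φ).re - m * ‖φ‖ ^ 2 + ‖φ‖ ^ 2)
    (hclosed : ∀ u : ℕ → H, (∀ k, u k ∈ dt) →
      (∀ ε > 0, ∃ N, ∀ j ≥ N, ∀ k ≥ N, tnormSq (u j - u k) < ε) →
      ∃ φ ∈ dt, Tendsto (fun k => tnormSq (u k - φ)) atTop (nhds 0))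
    -- `A` is a closed `|T|^(1/2)`-compact operator defined (at least) on `Dom t`
    (A : H →ₗ.[ℂ] H) (hdomA : dt ≤ A.domain)
    (hAclosed : IsClosed (A.graph : Set (H × H)))
    (hAcpt : ∀ (u : ℕ → H) (hu : ∀ k, u k ∈ dt), (∃ C, ∀ k, tnormSq (u k) ≤ C) →
      ∃ (g : ℕ → ℕ) (v : H), StrictMono g ∧
        Tendsto (fun k => A ⟨u (g k), hdomA (hu (g k))⟩) atTop (nhds v))
    -- `(T+A)* = T + A*`
    (hTAadj : (T + A).adjoint = T + A.adjoint)
    -- the relative form bound `|⟨Aφ,φ⟩| ≤ α t[φ] + β ‖φ‖²`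
    (α β : ℝ) (hα0 : 0 ≤ α) (hα1 : α < 1) (hβ : 0 ≤ β)
    (hbound : ∀ φ (hφ : φ ∈ dt), ‖(⟪φ, A ⟨φ, hdomA hφ⟩⟫ : ℂ)‖ ≤ α * (t φ φ).re + β * ‖φ‖ ^ 2)
    -- trial spaces
    (L : ℕ → Submodule ℂ H) (hL : ∀ n, L n ≤ dt)
    [∀ n, FiniteDimensional ℂ (L n)]
    (hLdense : ∀ φ ∈ dt, ∃ u : ℕ → H, (∀ n, u n ∈ L n) ∧
      Tendsto (fun n => tnormSq (φ - u n)) atTop (nhds 0))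
    -- compressions `T_n` of the form `t` and `S_n` of the form `s = t + ⟨A·,·⟩`
    (Tn Sn : ∀ n, L n →ₗ[ℂ] L n)
    (hTn : ∀ n, ∀ φ ψ : L n, (⟪ψ, Tn n φ⟫ : ℂ) = t (φ : H) (ψ : H))
    (hSn : ∀ n, ∀ φ ψ : L n, (⟪ψ, Sn n φ⟫ : ℂ) =
      t (φ : H) (ψ : H) + ⟪(ψ : H), A ⟨(φ : H), hdomA (hL n φ.2)⟩⟫)
    -- `Γ` is a compact `T_n`-regular subset of `ρ(T+A)`
    (Γ : Set ℂ) (hΓcpt : IsCompact Γ)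
    (hreg : ∃ δ > 0, ∃ N : ℕ, ∀ z ∈ Γ, ∀ n ≥ N, ∀ φ : L n, δ * ‖φ‖ ≤ ‖Tn n φ - z • φ‖)
    (hΓres : Γ ⊆ pmResolventSet (T + A)) :
    ∃ δ > 0, ∃ N : ℕ, ∀ z ∈ Γ, ∀ n ≥ N, ∀ φ : L n, δ * ‖φ‖ ≤ ‖Sn n φ - z • φ‖ := by
  obtain ⟨δ₀, hδ₀, N₀, hregN⟩ := hreg
  by_contra hcon
  push_neg at hcon
  -- Step 1: extract a sequence of near-singular vectors
  have key : ∀ k : ℕ, ∃ n, ∃ z, ∃ φ : L n, k ≤ n ∧ N₀ ≤ n ∧ z ∈ Γ ∧ ‖(φ : H)‖ = 1 ∧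
      ‖Sn n φ - z • φ‖ < ((k : ℝ) + 1)⁻¹ := by
    intro k
    obtain ⟨z, hz, n, hn, φ, hφ⟩ := hcon (((k : ℝ) + 1)⁻¹) (by positivity) (max k N₀)
    have hφne : φ ≠ 0 := by
      intro h0
      rw [h0] at hφ
      simp at hφ
    have hnpos : (0 : ℝ) < ‖(φ : H)‖ := by
      have : φ ≠ 0 := hφne
      have : (φ : H) ≠ 0 := by
        simpa [Submodule.coe_eq_zero] using this
      exact norm_pos_iff.mpr this
    set c : ℂ := ((‖(φ : H)‖ : ℝ) : ℂ)⁻¹ with hcdef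
    have hcnorm : ‖c‖ = ‖(φ : H)‖⁻¹ := by
      rw [hcdef, norm_inv, Complex.norm_real, Real.norm_eq_abs, abs_norm]
    refine ⟨n, z, c • φ, le_trans (le_max_left _ _) hn, le_trans (le_max_right _ _) hn, hz, ?_, ?_⟩
    · have : ((c • φ : L n) : H) = c • (φ : H) := rfl
      rw [this, norm_smul, hcnorm]
      field_simp
    · have heq : Sn n (c • φ) - z • (c • φ) = c • (Sn n φ - z • φ) := by
        rw [map_smul, smul_sub, smul_comm]
      rw [heq, norm_smul, hcnorm]
      have hnφ : ‖φ‖ = ‖(φ : H)‖ := rfl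
      calc ‖(φ : H)‖⁻¹ * ‖Sn n φ - z • φ‖
          < ‖(φ : H)‖⁻¹ * (((k : ℝ) + 1)⁻¹ * ‖(φ : H)‖) := by
            apply mul_lt_mul_of_pos_left _ (by positivity)
            rw [← hnφ]
            calc ‖Sn n φ - z • φ‖ < ((k : ℝ) + 1)⁻¹ * ‖φ‖ := hφ
            _ = ((k : ℝ) + 1)⁻¹ * ‖(φ : H)‖ := by rw [hnφ]
      _ = ((k : ℝ) + 1)⁻¹ := by field_simp
  choose nn0 zz0 ph0 hk0 hN0 hzΓ0 hnorm0 hlt0 using key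
  -- Step 2: a bound on Γ
  obtain ⟨M0, hM0b⟩ := hΓcpt.isBounded.exists_norm_le
  set M : ℝ := max M0 0 with hMdef
  have hM : ∀ z ∈ Γ, ‖z‖ ≤ M := fun z hz => le_trans (hM0b z hz) (le_max_left _ _)
  have hM0 : 0 ≤ M := le_max_right _ _
  -- Step 3: uniform bound on the form values
  set C₂ : ℝ := (1 + M + β) / (1 - α) + |m| + 1 with hC₂
  have htb : ∀ k, tnormSq (ph0 k : H) ≤ C₂ := by
    intro k
    set u : H := (ph0 k : H) with hu
    have hudt : u ∈ dt := hL _ (ph0 k).2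
    have hu1 : ‖u‖ = 1 := hnorm0 k
    have h1 : (⟪ph0 k, Sn (nn0 k) (ph0 k)⟫ : ℂ) = t u u + ⟪u, A ⟨u, hdomA hudt⟩⟫ :=
      hSn (nn0 k) (ph0 k) (ph0 k)
    have hinself : (⟪ph0 k, ph0 k⟫ : ℂ) = 1 := by
      rw [Submodule.coe_inner, inner_self_eq_norm_sq_to_K, ← hu, hu1]
      norm_num
    have h2 : (⟪ph0 k, Sn (nn0 k) (ph0 k) - zz0 k • ph0 k⟫ : ℂ)
        = t u u + ⟪u, A ⟨u, hdomA hudt⟩⟫ - zz0 k := by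
      rw [inner_sub_right, inner_smul_right, h1, hinself, mul_one]
    have h3 : ‖(⟪ph0 k, Sn (nn0 k) (ph0 k) - zz0 k • ph0 k⟫ : ℂ)‖ ≤ 1 := by
      calc ‖(⟪ph0 k, Sn (nn0 k) (ph0 k) - zz0 k • ph0 k⟫ : ℂ)‖
          ≤ ‖ph0 k‖ * ‖Sn (nn0 k) (ph0 k) - zz0 k • ph0 k‖ := norm_inner_le_norm _ _
      _ ≤ 1 * 1 := by
          apply mul_le_mul
          · exact le_of_eq (hnorm0 k)
          · exact le_trans (le_of_lt (hlt0 k)) (by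
              rw [inv_le_one_iff₀]
              right
              push_cast
              linarith [Nat.cast_nonneg (α := ℝ) k])
          · exact norm_nonneg _
          · norm_num
      _ = 1 := by norm_num
    have h4 : |(t u u).re + (⟪u, A ⟨u, hdomA hudt⟩⟫ : ℂ).re - (zz0 k).re| ≤ 1 := by
      have e : (t u u).re + (⟪u, A ⟨u, hdomA hudt⟩⟫ : ℂ).re - (zz0 k).re
          = ((⟪ph0 k, Sn (nn0 k) (ph0 k) - zz0 k • ph0 k⟫ : ℂ)).re := by
        rw [h2]
        simp
      rw [e]
      exact le_trans (Complex.abs_re_le_norm _) h3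
    have h5 : ‖(⟪u, A ⟨u, hdomA hudt⟩⟫ : ℂ)‖ ≤ α * (t u u).re + β := by
      have := hbound u hudt
      rw [hu1] at this
      simpa using this
    have h6 : |(⟪u, A ⟨u, hdomA hudt⟩⟫ : ℂ).re| ≤ α * (t u u).re + β :=
      le_trans (Complex.abs_re_le_norm _) h5
    have h7 : |(zz0 k).re| ≤ M := le_trans (Complex.abs_re_le_norm _) (hM _ (hzΓ0 k))
    have h8 : (t u u).re ≤ (1 + M + β) / (1 - α) := by
      rw [le_div_iff₀ (by linarith)]
      cases' abs_le.mp h4 with h4a h4b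
      cases' abs_le.mp h6 with h6a h6b
      cases' abs_le.mp h7 with h7a h7b
      nlinarith
    rw [htn u, hu1]
    calc (t u u).re - m * 1 ^ 2 + 1 ^ 2 ≤ (1 + M + β) / (1 - α) - m + 1 := by linarith
    _ ≤ C₂ := by
        rw [hC₂]
        have : -m ≤ |m| := neg_le_abs m
        linarith
  -- Step 4: extract compact subsequence for A
  obtain ⟨g, v, hg, hAv⟩ := hAcpt (fun k => (ph0 k : H)) (fun k => hL _ (ph0 k).2) ⟨C₂, htb⟩
  -- Step 5: extract convergent subsequence of z
  obtain ⟨z₀, hz₀Γ, g₂, hg₂, hzconv⟩ := hΓcpt.tendsto_subseq (x := fun k => zz0 (g k))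
    (fun k => hzΓ0 (g k))
  -- Step 6: compose the subsequences and rename
  set G : ℕ → ℕ := g ∘ g₂ with hGdef
  have hGmono : StrictMono G := hg.comp hg₂
  set nn : ℕ → ℕ := fun k => nn0 (G k) with hnn
  set zz : ℕ → ℂ := fun k => zz0 (G k) with hzz
  have hkn : ∀ k, k ≤ nn k := fun k => le_trans hGmono.le_apply (hk0 (G k))
  have hNn : ∀ k, N₀ ≤ nn k := fun k => hN0 (G k)
  have hzG : ∀ k, zz k ∈ Γ := fun k => hzΓ0 (G k)
  have hzlim : Tendsto zz atTop (nhds z₀) := hzconv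
  have hnorm1 : ∀ k, ‖((ph0 (G k)) : H)‖ = 1 := fun k => hnorm0 (G k)
  have hrlt : ∀ k, ‖Sn (nn k) (ph0 (G k)) - zz k • ph0 (G k)‖ ≤ ((k : ℝ) + 1)⁻¹ := by
    intro k
    refine le_trans (le_of_lt (hlt0 (G k))) ?_
    apply inv_anti₀ (by positivity)
    have : (k : ℝ) ≤ (G k : ℝ) := by exact_mod_cast hGmono.le_apply
    linarith
  have hAconv : Tendsto (fun k => A ⟨((ph0 (G k)) : H), hdomA (hL _ (ph0 (G k)).2)⟩)
      atTop (nhds v) := hAv.comp hg₂.tendsto_atTop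
  have htbG : ∀ k, tnormSq ((ph0 (G k)) : H) ≤ C₂ := fun k => htb (G k)
  -- Step 7: resolvent data at z₀ and dense domains
  obtain ⟨R, hR1, hR2⟩ := hΓres hz₀Γ
  have hTdense : Dense (T.domain : Set H) := hsa.dense_domain
  have hTsubA : T.domain ≤ A.domain := le_trans hdomt hdomA
  have hSdom_eq : (T + A).domain = T.domain := by
    rw [LinearPMap.add_domain]
    exact inf_eq_left.mpr hTsubA
  have hSdense : Dense ((T + A).domain : Set H) := by
    rw [hSdom_eq]
    exact hTdense
  have hAdense : Dense (A.domain : Set H) := hTdense.mono hTsubA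
  -- Step 8: the adjoint package: for every h there is an x in Dom(T) ∩ Dom(A*) with
  -- (T + A* - z₀bar) x = h, and x = R* h
  have hcast : ∀ (S1 S2 : H →ₗ.[ℂ] H), S1 = S2 → ∀ x (hx : x ∈ S1.domain),
      ∃ hx2 : x ∈ S2.domain, S1 ⟨x, hx⟩ = S2 ⟨x, hx2⟩ := by
    rintro S1 S2 rfl x hx
    exact ⟨hx, rfl⟩
  have hx_pack : ∀ h : H, ∃ (hxT : ContinuousLinearMap.adjoint R h ∈ T.domain)
      (hxA : ContinuousLinearMap.adjoint R h ∈ A.adjoint.domain),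
      T ⟨ContinuousLinearMap.adjoint R h, hxT⟩ + A.adjoint ⟨ContinuousLinearMap.adjoint R h, hxA⟩
        = h + (starRingEnd ℂ z₀) • (ContinuousLinearMap.adjoint R h) := by
    intro h
    set x : H := ContinuousLinearMap.adjoint R h with hxdef
    have hinner : ∀ u : (T + A).domain, (⟪h + (starRingEnd ℂ z₀) • x, (u : H)⟫ : ℂ)
        = ⟪x, (T + A) u⟫ := by
      intro u
      have e0 : R ((T + A) u - z₀ • (u : H)) = (u : H) := hR2 u
      calc (⟪h + (starRingEnd ℂ z₀) • x, (u : H)⟫ : ℂ)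
          = ⟪h, (u : H)⟫ + z₀ * ⟪x, (u : H)⟫ := by
            rw [inner_add_left, inner_smul_left]
            simp
      _ = ⟪h, R ((T + A) u - z₀ • (u : H))⟫ + z₀ * ⟪x, (u : H)⟫ := by rw [e0]
      _ = ⟪x, (T + A) u - z₀ • (u : H)⟫ + z₀ * ⟪x, (u : H)⟫ := by
            rw [hxdef]
            simp only [ContinuousLinearMap.adjoint_inner_left]
      _ = ⟪x, (T + A) u⟫ := by
            rw [inner_sub_right, inner_smul_right]
            ring
    have hmem : x ∈ (T + A).adjoint.domain :=
      LinearPMap.mem_adjoint_domain_of_exists x ⟨h + (starRingEnd ℂ z₀) • x, hinner⟩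
    have hval : (T + A).adjoint ⟨x, hmem⟩ = h + (starRingEnd ℂ z₀) • x :=
      LinearPMap.adjoint_apply_eq hSdense ⟨x, hmem⟩ (fun u => hinner u)
    obtain ⟨hmem2, heq2⟩ := hcast _ _ hTAadj x hmem
    refine ⟨hmem2.1, hmem2.2, ?_⟩
    have hadd : (T + A.adjoint) ⟨x, hmem2⟩ = T ⟨x, hmem2.1⟩ + A.adjoint ⟨x, hmem2.2⟩ := rfl
    rw [← hadd, ← heq2, hval]
  have hAfa := LinearPMap.adjoint_isFormalAdjoint hAdense
  -- abbreviations
  set uu : ℕ → H := fun k => ((ph0 (G k)) : H) with huu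
  have huudt : ∀ k, uu k ∈ dt := fun k => hL _ (ph0 (G k)).2
  set Avk : ℕ → H := fun k => A ⟨uu k, hdomA (huudt k)⟩ with hAvk
  have hAconv' : Tendsto Avk atTop (nhds v) := hAconv
  have hnnt : Tendsto nn atTop atTop := tendsto_atTop_mono hkn tendsto_id
  have htpos : ∀ y ∈ dt, ‖y‖ ^ 2 ≤ tnormSq y := by
    intro y hy
    rw [htn y]
    have := hlb y hy
    linarith
  have htnn : ∀ y ∈ dt, 0 ≤ tnormSq y := fun y hy => le_trans (sq_nonneg _) (htpos y hy)
  have hC₂0 : 0 ≤ C₂ := le_trans (htnn _ (huudt 0)) (htbG 0)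
  -- Step 9: weak convergence to 0
  have weak : ∀ h : H, Tendsto (fun k => (⟪h, uu k⟫ : ℂ)) atTop (nhds 0) := by
    intro h
    obtain ⟨hxT, hxA, hxval⟩ := hx_pack h
    set x : H := ContinuousLinearMap.adjoint R h with hxdef
    have hxdt : x ∈ dt := hdomt hxT
    obtain ⟨wapp, hwappL, hwappt⟩ := hLdense x hxdt
    have hwdt : ∀ k, x - wapp (nn k) ∈ dt :=
      fun k => dt.sub_mem hxdt (hL (nn k) (hwappL (nn k)))
    have hwt : Tendsto (fun k => tnormSq (x - wapp (nn k))) atTop (nhds 0) := hwappt.comp hnnt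
    -- the exact identity
    have hid : ∀ k, (⟪h, uu k⟫ : ℂ) = t (uu k) x + ⟪x, Avk k⟫ - z₀ * ⟪x, uu k⟫ := by
      intro k
      have e1 : t (uu k) x = starRingEnd ℂ (t x (uu k)) := therm x hxdt (uu k) (huudt k)
      have e2 : t x (uu k) = ⟪uu k, T ⟨x, hxT⟩⟫ := hcomp ⟨x, hxT⟩ (uu k) (huudt k)
      have e3 : (⟪x, Avk k⟫ : ℂ) = ⟪(A.adjoint ⟨x, hxA⟩ : H), uu k⟫ :=
        (hAfa ⟨x, hxA⟩ ⟨uu k, hdomA (huudt k)⟩).symm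
      symm
      calc t (uu k) x + ⟪x, Avk k⟫ - z₀ * ⟪x, uu k⟫
          = (⟪(T ⟨x, hxT⟩ : H), uu k⟫ : ℂ) + ⟪(A.adjoint ⟨x, hxA⟩ : H), uu k⟫
            - z₀ * ⟪x, uu k⟫ := by
            rw [e1, e2, inner_conj_symm, e3]
      _ = (⟪(T ⟨x, hxT⟩ : H) + (A.adjoint ⟨x, hxA⟩ : H), uu k⟫ : ℂ) - z₀ * ⟪x, uu k⟫ := by
            rw [inner_add_left]
      _ = (⟪h + (starRingEnd ℂ z₀) • x, uu k⟫ : ℂ) - z₀ * ⟪x, uu k⟫ := by rw [hxval]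
      _ = (⟪h, uu k⟫ : ℂ) := by
            rw [inner_add_left, inner_smul_left]
            simp
    -- the Galerkin identity
    have hid2 : ∀ k, (⟪(⟨wapp (nn k), hwappL (nn k)⟩ : L (nn k)),
        Sn (nn k) (ph0 (G k)) - zz k • ph0 (G k)⟫ : ℂ)
        = t (uu k) (wapp (nn k)) + ⟪wapp (nn k), Avk k⟫ - zz k * ⟪wapp (nn k), uu k⟫ := by
      intro k
      rw [inner_sub_right, inner_smul_right, hSn (nn k) (ph0 (G k)) ⟨wapp (nn k), hwappL (nn k)⟩,
        Submodule.coe_inner]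
    -- the decomposition
    have hdec : ∀ k, (⟪h, uu k⟫ : ℂ)
        = (⟪(⟨wapp (nn k), hwappL (nn k)⟩ : L (nn k)),
            Sn (nn k) (ph0 (G k)) - zz k • ph0 (G k)⟫ : ℂ)
          + (t (uu k)) (x - wapp (nn k))
          + ⟪x - wapp (nn k), Avk k⟫
          + ((zz k - z₀) * ⟪wapp (nn k), uu k⟫ + z₀ * ⟪wapp (nn k) - x, uu k⟫) := by
      intro k
      rw [hid k, hid2 k, map_sub, inner_sub_left, inner_sub_left]
      ring
    -- bound each term
    have hbnd : ∀ k, ‖(⟪h, uu k⟫ : ℂ)‖ ≤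
        ‖wapp (nn k)‖ * ((k : ℝ) + 1)⁻¹
        + (Real.sqrt (C₂ * tnormSq (x - wapp (nn k))) + |1 - m| * ‖x - wapp (nn k)‖)
        + ‖x - wapp (nn k)‖ * ‖Avk k‖
        + (‖zz k - z₀‖ * ‖wapp (nn k)‖ + ‖z₀‖ * ‖x - wapp (nn k)‖) := by
      intro k
      rw [hdec k]
      refine le_trans (norm_add_le _ _) ?_
      refine add_le_add (le_trans (norm_add_le _ _) (add_le_add (le_trans (norm_add_le _ _)
        (add_le_add ?_ ?_)) ?_)) ?_
      · -- Galerkin residual term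
        calc ‖(⟪(⟨wapp (nn k), hwappL (nn k)⟩ : L (nn k)),
              Sn (nn k) (ph0 (G k)) - zz k • ph0 (G k)⟫ : ℂ)‖
            ≤ ‖(⟨wapp (nn k), hwappL (nn k)⟩ : L (nn k))‖ *
              ‖Sn (nn k) (ph0 (G k)) - zz k • ph0 (G k)‖ := norm_inner_le_norm _ _
        _ ≤ ‖wapp (nn k)‖ * ((k : ℝ) + 1)⁻¹ := by
            apply mul_le_mul_of_nonneg_left (hrlt k) (norm_nonneg _)
      · -- the form term
        have hq := form_cs dt t m therm hlb (huudt k) (hwdt k)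
        have ha1 : (t (uu k) (uu k)).re + (1 - m) * ‖uu k‖ ^ 2 = tnormSq (uu k) := by
          rw [htn (uu k)]
          ring
        have hc1 : (t (x - wapp (nn k)) (x - wapp (nn k))).re
            + (1 - m) * ‖x - wapp (nn k)‖ ^ 2 = tnormSq (x - wapp (nn k)) := by
          rw [htn (x - wapp (nn k))]
          ring
        rw [ha1, hc1] at hq
        have hq2 : ‖t (uu k) (x - wapp (nn k))
            + ((1 : ℂ) - (m : ℂ)) * ⟪x - wapp (nn k), uu k⟫‖ ^ 2
            ≤ C₂ * tnormSq (x - wapp (nn k)) := by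
          refine le_trans hq ?_
          exact mul_le_mul_of_nonneg_right (htbG k) (htnn _ (hwdt k))
        have hq3 : ‖t (uu k) (x - wapp (nn k))
            + ((1 : ℂ) - (m : ℂ)) * ⟪x - wapp (nn k), uu k⟫‖
            ≤ Real.sqrt (C₂ * tnormSq (x - wapp (nn k))) := by
          refine (Real.le_sqrt (norm_nonneg _) ?_).mpr hq2
          exact mul_nonneg hC₂0 (htnn _ (hwdt k))
        have e4 : (t (uu k)) (x - wapp (nn k))
            = (t (uu k) (x - wapp (nn k)) + ((1 : ℂ) - (m : ℂ)) * ⟪x - wapp (nn k), uu k⟫)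
              - ((1 : ℂ) - (m : ℂ)) * ⟪x - wapp (nn k), uu k⟫ := by ring
        rw [e4]
        refine le_trans (norm_sub_le _ _) (add_le_add hq3 ?_)
        rw [norm_mul]
        have e5 : ‖((1 : ℂ) - (m : ℂ))‖ = |1 - m| := by
          rw [show ((1 : ℂ) - (m : ℂ)) = ((1 - m : ℝ) : ℂ) by push_cast; ring,
            Complex.norm_real, Real.norm_eq_abs]
        rw [e5]
        refine mul_le_mul_of_nonneg_left ?_ (abs_nonneg _)
        calc ‖(⟪x - wapp (nn k), uu k⟫ : ℂ)‖ ≤ ‖x - wapp (nn k)‖ * ‖uu k‖ :=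
          norm_inner_le_norm _ _
        _ = ‖x - wapp (nn k)‖ := by rw [hnorm1 k, mul_one]
      · -- A term
        exact norm_inner_le_norm _ _
      · -- z term
        refine le_trans (norm_add_le _ _) (add_le_add ?_ ?_)
        · rw [norm_mul]
          refine mul_le_mul_of_nonneg_left ?_ (norm_nonneg _)
          calc ‖(⟪wapp (nn k), uu k⟫ : ℂ)‖ ≤ ‖wapp (nn k)‖ * ‖uu k‖ := norm_inner_le_norm _ _
          _ = ‖wapp (nn k)‖ := by rw [hnorm1 k, mul_one]
        · rw [norm_mul]
          refine mul_le_mul_of_nonneg_left ?_ (norm_nonneg _)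
          calc ‖(⟪wapp (nn k) - x, uu k⟫ : ℂ)‖ ≤ ‖wapp (nn k) - x‖ * ‖uu k‖ :=
            norm_inner_le_norm _ _
          _ = ‖x - wapp (nn k)‖ := by rw [hnorm1 k, mul_one, norm_sub_rev]
    -- now the squeeze
    have hwnorm : Tendsto (fun k => ‖x - wapp (nn k)‖) atTop (nhds 0) := by
      have hs1 : Tendsto (fun k => Real.sqrt (tnormSq (x - wapp (nn k)))) atTop (nhds 0) := by
        have := (Real.continuous_sqrt.tendsto 0).comp hwt
        simpa [Function.comp_def] using this
      refine squeeze_zero (fun k => norm_nonneg _) (fun k => ?_) hs1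
      refine (Real.le_sqrt (norm_nonneg _) (htnn _ (hwdt k))).mpr (htpos _ (hwdt k))
    have hwapplim : Tendsto (fun k => wapp (nn k)) atTop (nhds x) := by
      rw [tendsto_iff_norm_sub_tendsto_zero]
      simpa [norm_sub_rev] using hwnorm
    have hwnormlim : Tendsto (fun k => ‖wapp (nn k)‖) atTop (nhds ‖x‖) := hwapplim.norm
    have hAnormlim : Tendsto (fun k => ‖Avk k‖) atTop (nhds ‖v‖) := hAconv'.norm
    have hzdiff : Tendsto (fun k => ‖zz k - z₀‖) atTop (nhds 0) := by
      have := (hzlim.sub (tendsto_const_nhds (x := z₀))).norm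
      simpa only [sub_self, norm_zero] using this
    have hinv : Tendsto (fun k : ℕ => ((k : ℝ) + 1)⁻¹) atTop (nhds 0) := by
      simpa [one_div] using tendsto_one_div_add_atTop_nhds_zero_nat (𝕜 := ℝ)
    have hsqrtC : Tendsto (fun k => Real.sqrt (C₂ * tnormSq (x - wapp (nn k))))
        atTop (nhds 0) := by
      have := (Real.continuous_sqrt.tendsto (C₂ * 0)).comp
        ((tendsto_const_nhds (x := C₂)).mul hwt)
      simpa [Function.comp_def] using this
    have hB : Tendsto (fun k =>
        ‖wapp (nn k)‖ * ((k : ℝ) + 1)⁻¹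
        + (Real.sqrt (C₂ * tnormSq (x - wapp (nn k))) + |1 - m| * ‖x - wapp (nn k)‖)
        + ‖x - wapp (nn k)‖ * ‖Avk k‖
        + (‖zz k - z₀‖ * ‖wapp (nn k)‖ + ‖z₀‖ * ‖x - wapp (nn k)‖)) atTop
        (nhds (‖x‖ * 0 + (0 + |1 - m| * 0) + 0 * ‖v‖ + (0 * ‖x‖ + ‖z₀‖ * 0))) := by
      exact (((hwnormlim.mul hinv).add
        (hsqrtC.add ((tendsto_const_nhds (x := |1 - m|)).mul hwnorm))).add
        (hwnorm.mul hAnormlim)).add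
        ((hzdiff.mul hwnormlim).add ((tendsto_const_nhds (x := ‖z₀‖)).mul hwnorm))
    have hB0 : Tendsto (fun k =>
        ‖wapp (nn k)‖ * ((k : ℝ) + 1)⁻¹
        + (Real.sqrt (C₂ * tnormSq (x - wapp (nn k))) + |1 - m| * ‖x - wapp (nn k)‖)
        + ‖x - wapp (nn k)‖ * ‖Avk k‖
        + (‖zz k - z₀‖ * ‖wapp (nn k)‖ + ‖z₀‖ * ‖x - wapp (nn k)‖)) atTop (nhds 0) := by
      simpa using hB
    rw [tendsto_zero_iff_norm_tendsto_zero]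
    exact squeeze_zero (fun k => norm_nonneg _) hbnd hB0
  -- Step 10: v = 0
  have hv0 : v = 0 := by
    have hinner0 : ∀ h : H, (⟪h, R v⟫ : ℂ) = 0 := by
      intro h
      obtain ⟨hxT, hxA, _⟩ := hx_pack h
      set x : H := ContinuousLinearMap.adjoint R h with hxdef
      have lim1 : Tendsto (fun k => (⟪x, Avk k⟫ : ℂ)) atTop (nhds ⟪x, v⟫) :=
        Filter.Tendsto.inner tendsto_const_nhds hAconv'
      have lim2 : Tendsto (fun k => (⟪x, Avk k⟫ : ℂ)) atTop (nhds 0) := by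
        have heqf : (fun k => (⟪x, Avk k⟫ : ℂ))
            = fun k => (⟪(A.adjoint ⟨x, hxA⟩ : H), uu k⟫ : ℂ) :=
          funext fun k => (hAfa ⟨x, hxA⟩ ⟨uu k, hdomA (huudt k)⟩).symm
        rw [heqf]
        exact weak (A.adjoint ⟨x, hxA⟩)
      have hxv : (⟪x, v⟫ : ℂ) = 0 := tendsto_nhds_unique lim1 lim2
      rw [hxdef, ContinuousLinearMap.adjoint_inner_left] at hxv
      exact hxv
    have hRv : R v = 0 := by
      have := hinner0 (R v)
      exact inner_self_eq_zero.mp this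
    obtain ⟨hy, hveq⟩ := hR1 v
    have hz : (⟨R v, hy⟩ : (T + A).domain) = 0 := Subtype.ext (by simpa using hRv)
    rw [hz, LinearPMap.map_zero, hRv] at hveq
    simpa using hveq.symm
  -- Step 11: the final contradiction via T_n-regularity
  have hfin : ∀ k : ℕ, δ₀ ≤ ((k : ℝ) + 1)⁻¹ + ‖Avk k‖ := by
    intro k
    set P : L (nn k) := Submodule.orthogonalProjectionOnto (L (nn k)) (Avk k) with hP
    have hPT : Sn (nn k) (ph0 (G k)) = Tn (nn k) (ph0 (G k)) + P := by
      have hall : ∀ χ : L (nn k),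
          (⟪χ, Sn (nn k) (ph0 (G k)) - (Tn (nn k) (ph0 (G k)) + P)⟫ : ℂ) = 0 := by
        intro χ
        rw [inner_sub_right, inner_add_right, hSn (nn k) (ph0 (G k)) χ,
          hTn (nn k) (ph0 (G k)) χ]
        have horth : (⟪Avk k - (P : H), (χ : H)⟫ : ℂ) = 0 :=
          Submodule.starProjection_inner_eq_zero (K := L (nn k)) (Avk k) (χ : H) χ.2
        have : (⟪(χ : H), Avk k - (P : H)⟫ : ℂ) = 0 := by
          rw [← inner_conj_symm, horth, map_zero]
        rw [inner_sub_right] at this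
        have hPP : (⟪χ, P⟫ : ℂ) = ⟪(χ : H), (P : H)⟫ := Submodule.coe_inner _ _ _
        rw [hPP]
        have : (⟪(χ : H), Avk k⟫ : ℂ) = ⟪(χ : H), (P : H)⟫ := by linear_combination this
        rw [this]
        ring
      have h0 := hall (Sn (nn k) (ph0 (G k)) - (Tn (nn k) (ph0 (G k)) + P))
      rw [inner_self_eq_zero] at h0
      exact sub_eq_zero.mp h0
    have hTnid : Tn (nn k) (ph0 (G k)) - zz k • ph0 (G k)
        = (Sn (nn k) (ph0 (G k)) - zz k • ph0 (G k)) - P := by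
      rw [hPT]
      abel
    have hreg1 : δ₀ ≤ ‖Tn (nn k) (ph0 (G k)) - zz k • ph0 (G k)‖ := by
      have := hregN (zz k) (hzG k) (nn k) (hNn k) (ph0 (G k))
      have hφn : ‖ph0 (G k)‖ = 1 := hnorm1 k
      rwa [hφn, mul_one] at this
    have hPnorm : ‖P‖ ≤ ‖Avk k‖ := by
      have : ‖(P : H)‖ ≤ ‖Avk k‖ := by
        calc ‖(P : H)‖ ≤ ‖Submodule.orthogonalProjectionOnto (L (nn k))‖ * ‖Avk k‖ :=
          (Submodule.orthogonalProjectionOnto (L (nn k))).le_opNorm (Avk k)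
        _ ≤ 1 * ‖Avk k‖ := mul_le_mul_of_nonneg_right
            (Submodule.orthogonalProjectionOnto_norm_le (L (nn k))) (norm_nonneg _)
        _ = ‖Avk k‖ := one_mul _
      exact this
    calc δ₀ ≤ ‖Tn (nn k) (ph0 (G k)) - zz k • ph0 (G k)‖ := hreg1
    _ = ‖(Sn (nn k) (ph0 (G k)) - zz k • ph0 (G k)) - P‖ := by rw [hTnid]
    _ ≤ ‖Sn (nn k) (ph0 (G k)) - zz k • ph0 (G k)‖ + ‖P‖ := norm_sub_le _ _
    _ ≤ ((k : ℝ) + 1)⁻¹ + ‖Avk k‖ := add_le_add (hrlt k) hPnorm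
  have hAn0 : Tendsto (fun k => ‖Avk k‖) atTop (nhds 0) := by
    have := hAconv'.norm
    rw [hv0] at this
    simpa using this
  have hinv : Tendsto (fun k : ℕ => ((k : ℝ) + 1)⁻¹) atTop (nhds 0) := by
    simpa [one_div] using tendsto_one_div_add_atTop_nhds_zero_nat (𝕜 := ℝ)
  have hlim0 : Tendsto (fun k : ℕ => ((k : ℝ) + 1)⁻¹ + ‖Avk k‖) atTop (nhds 0) := by
    simpa using hinv.add hAn0
  have : δ₀ ≤ 0 := ge_of_tendsto' hlim0 hfin
  linarith
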